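/- For every n ≥ 1, the formula KBKF_n has a Q-Res+S refutation of length at most 5n, i.e., the empty clause can be derived from the clauses of KBKF_n using at most 5n applications of the rules S, R, U (plus axiom applications). -/

import Mathlib

/-! Generic framework for QBFs in prenex CNF. -/

inductive Q
  | ex
  | all
deriving DecidableEq

abbrev Lit (V : Type) := V × Bool
abbrev Clause (V : Type) := Finset (Lit V)
abbrev Cnf (V : Type) := Finset (Clause V)
abbrev QPrefix (V : Type) := List (Q × V)

variable {V : Type} [DecidableEq V]

/-- Negation of a literal. -/
def negLit (l : Lit V) : Lit V := (l.1, !l.2)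

/-- Evaluation of a literal under an assignment. -/
def evalLit (τ : V → Bool) (l : Lit V) : Bool := if l.2 then τ l.1 else !(τ l.1)

/-- An assignment satisfies a clause if some literal evaluates to true. -/
def SatClause (τ : V → Bool) (C : Clause V) : Prop := ∃ l ∈ C, evalLit τ l = true

/-- An assignment satisfies a CNF if it satisfies all clauses. -/
def SatCnf (τ : V → Bool) (φ : Cnf V) : Prop := ∀ C ∈ φ, SatClause τ C

/-- Recursive semantics of a quantifier prefix over a matrix predicate. -/
def QTrue : QPrefix V → (V → Bool) → ((V → Bool) → Prop) → Prop
  | [], τ, M => M τ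
  | (Q.ex, v) :: P, τ, M => ∃ b, QTrue P (Function.update τ v b) M
  | (Q.all, v) :: P, τ, M => ∀ b, QTrue P (Function.update τ v b) M

/-- Truth of a prenex CNF QBF (closed; the default assignment is irrelevant). -/
def QBFTrue (P : QPrefix V) (φ : Cnf V) : Prop :=
  QTrue P (fun _ => false) (fun τ => SatCnf τ φ)

/-- Two variables are in the same quantifier block of a prefix. -/
def SameBlock (P : QPrefix V) (v w : V) : Prop :=
  ∃ i j : ℕ, (∃ q : Q, P[i]? = some (q, v)) ∧ (∃ q : Q, P[j]? = some (q, w)) ∧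
    ∀ (k₁ k₂ : ℕ) (e₁ e₂ : Q × V), min i j ≤ k₁ → k₁ ≤ k₂ → k₂ ≤ max i j →
      P[k₁]? = some e₁ → P[k₂]? = some e₂ → e₁.1 = e₂.1

/-- An admissible literal map for a prefix: a bijection on literals commuting with
negation and moving variables only within their quantifier block. -/
structure Admissible (P : QPrefix V) (σ : Lit V → Lit V) : Prop where
  bij : Function.Bijective σ
  neg : ∀ l, σ (negLit l) = negLit (σ l)
  block : ∀ v w b c, σ (v, b) = (w, c) → v ≠ w → SameBlock P v w

/-- Action of a literal map on a clause. -/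
def mapClause (σ : Lit V → Lit V) (C : Clause V) : Clause V := C.image σ

/-- A (syntactic) symmetry of a QBF: an admissible map sending the clause set to itself. -/
def IsSymmetry (P : QPrefix V) (φ : Cnf V) (σ : Lit V → Lit V) : Prop :=
  Admissible P σ ∧ φ.image (mapClause σ) = φ

def IsExist (P : QPrefix V) (v : V) : Prop := (Q.ex, v) ∈ P
def IsUniv (P : QPrefix V) (v : V) : Prop := (Q.all, v) ∈ P

/-- A clause is a tautology if it contains complementary literals. -/
def Tauto (C : Clause V) : Prop := ∃ l ∈ C, negLit l ∈ C

/-- Rule R of Q-Res: resolution over an existential variable, with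
non-tautological resolvent. -/
def ResStep (P : QPrefix V) (E₁ E₂ E : Clause V) : Prop :=
  ∃ x, IsExist P x ∧ (x, true) ∈ E₁ ∧ (x, false) ∈ E₂ ∧
    E = E₁.erase (x, true) ∪ E₂.erase (x, false) ∧ ¬ Tauto E

/-- Prefix order on variables: `v` occurs strictly before `w`. -/
def LtP (P : QPrefix V) (v w : V) : Prop :=
  ∃ i j : ℕ, i < j ∧ (∃ q : Q, P[i]? = some (q, v)) ∧ (∃ q : Q, P[j]? = some (q, w))

/-- Rule U of Q-Res: universal reduction. -/
def URed (P : QPrefix V) (F₁ F : Clause V) : Prop :=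
  ∃ l, IsUniv P l.1 ∧ l ∈ F₁ ∧ negLit l ∉ F₁ ∧ F = F₁.erase l ∧
    ∀ k ∈ F₁.erase l, IsExist P k.1 → LtP P k.1 l.1

/-- Derivability in Q-Res (rules A, R, U). -/
inductive Derives (P : QPrefix V) (φ : Cnf V) : Clause V → Prop
  | ax {C : Clause V} : C ∈ φ → Derives P φ C
  | res {E₁ E₂ E : Clause V} :
      Derives P φ E₁ → Derives P φ E₂ → ResStep P E₁ E₂ E → Derives P φ E
  | ured {F₁ F : Clause V} : Derives P φ F₁ → URed P F₁ F → Derives P φ F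

/-- Derivability in Q-Res+S (rules A, R, U, S). -/
inductive DerivesS (P : QPrefix V) (φ : Cnf V) : Clause V → Prop
  | ax {C : Clause V} : C ∈ φ → DerivesS P φ C
  | res {E₁ E₂ E : Clause V} :
      DerivesS P φ E₁ → DerivesS P φ E₂ → ResStep P E₁ E₂ E → DerivesS P φ E
  | ured {F₁ F : Clause V} : DerivesS P φ F₁ → URed P F₁ F → DerivesS P φ F
  | sym {C : Clause V} {σ : Lit V → Lit V} :
      DerivesS P φ C → IsSymmetry P φ σ → DerivesS P φ (mapClause σ C)

/-- A clause available at step `i` of a derivation sequence: an input clause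
(axiom rule A, not counted as a step) or an earlier line. -/
def Avail (φ : Cnf V) (D : List (Clause V)) (i : ℕ) (C : Clause V) : Prop :=
  C ∈ φ ∨ ∃ j, ∃ _ : j < i, ∃ hj : j < D.length, D[j]'hj = C

/-- Line `C` at position `i` is justified by rule R or U from available clauses. -/
def StepOK (P : QPrefix V) (φ : Cnf V) (D : List (Clause V)) (i : ℕ) (C : Clause V) : Prop :=
  (∃ E₁ E₂, Avail φ D i E₁ ∧ Avail φ D i E₂ ∧ ResStep P E₁ E₂ C) ∨
  (∃ F₁, Avail φ D i F₁ ∧ URed P F₁ C)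

/-- Line justified by rule R, U or the symmetry rule S. -/
def StepOKS (P : QPrefix V) (φ : Cnf V) (D : List (Clause V)) (i : ℕ) (C : Clause V) : Prop :=
  StepOK P φ D i C ∨
  (∃ F₁ σ, Avail φ D i F₁ ∧ IsSymmetry P φ σ ∧ C = mapClause σ F₁)

/-- A Q-Res refutation, as a sequence of R/U steps ending in the empty clause;
its length is the number of R and U applications. -/
def IsRefutation (P : QPrefix V) (φ : Cnf V) (D : List (Clause V)) : Prop :=
  (∀ i (hi : i < D.length), StepOK P φ D i (D[i]'hi)) ∧ D.getLast? = some (∅ : Clause V)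

/-- A Q-Res+S refutation. -/
def IsRefutationS (P : QPrefix V) (φ : Cnf V) (D : List (Clause V)) : Prop :=
  (∀ i (hi : i < D.length), StepOKS P φ D i (D[i]'hi)) ∧ D.getLast? = some (∅ : Clause V)

/-- A derivation sequence using rules A, R, U: every line is an input clause or
follows from earlier lines by R or U. -/
def IsDerivation (P : QPrefix V) (φ : Cnf V) (D : List (Clause V)) : Prop :=
  ∀ i (hi : i < D.length), (D[i]'hi) ∈ φ ∨
    (∃ j k, ∃ hj : j < i, ∃ hk : k < i,
      ResStep P (D[j]'(Nat.lt_trans hj hi)) (D[k]'(Nat.lt_trans hk hi)) (D[i]'hi)) ∨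
    (∃ j, ∃ hj : j < i, URed P (D[j]'(Nat.lt_trans hj hi)) (D[i]'hi))

/-! The KBKF formula family (variables indexed 1..n). -/

inductive KV
  | x (i : ℕ)
  | y (i : ℕ)
  | a (i : ℕ)
  | z (i : ℕ)
deriving DecidableEq

/-- Prefix ∃x₁y₁∀a₁ … ∃xₙyₙ∀aₙ ∃z₁…zₙ. -/
def kPrefix (n : ℕ) : QPrefix KV :=
  ((List.range n).flatMap
    (fun j => [(Q.ex, KV.x (j+1)), (Q.ex, KV.y (j+1)), (Q.all, KV.a (j+1))])) ++
  (List.range n).map (fun j => (Q.ex, KV.z (j+1)))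

/-- The tail z̄₁ ∨ … ∨ z̄ₙ. -/
def kZneg (n : ℕ) : Clause KV := (Finset.range n).image (fun j => ((KV.z (j+1), false) : Lit KV))

/-- The clauses of KBKF_n. -/
def kbkf (n : ℕ) : Cnf KV :=
  {({(KV.x 1, false), (KV.y 1, false)} : Clause KV)} ∪
  ((Finset.range (n-1)).image (fun j =>
    ({(KV.x (j+1), true), (KV.a (j+1), false), (KV.x (j+2), false), (KV.y (j+2), false)} : Clause KV))) ∪
  ((Finset.range (n-1)).image (fun j =>
    ({(KV.y (j+1), true), (KV.a (j+1), true), (KV.x (j+2), false), (KV.y (j+2), false)} : Clause KV))) ∪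
  {({(KV.x n, true), (KV.a n, false)} : Clause KV) ∪ kZneg n,
   ({(KV.y n, true), (KV.a n, true)} : Clause KV) ∪ kZneg n} ∪
  ((Finset.range n).image (fun j => ({(KV.a (j+1), true), (KV.z (j+1), true)} : Clause KV))) ∪
  ((Finset.range n).image (fun j => ({(KV.a (j+1), false), (KV.z (j+1), true)} : Clause KV)))

/-- The symmetry σᵢ = (xᵢ yᵢ)(x̄ᵢ ȳᵢ)(aᵢ āᵢ) of KBKF_n. -/
def kSigma (i : ℕ) : Lit KV → Lit KV
  | (KV.x j, b) => if j = i then (KV.y j, b) else (KV.x j, b)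
  | (KV.y j, b) => if j = i then (KV.x j, b) else (KV.y j, b)
  | (KV.a j, b) => if j = i then (KV.a j, !b) else (KV.a j, b)
  | (KV.z j, b) => (KV.z j, b)

/-- The symmetry breaker ψₙ = (x̄₁∨y₁) ∧ … ∧ (x̄ₙ∨yₙ) for KBKF_n. -/
def kPsi (n : ℕ) : Cnf KV :=
  (Finset.range n).image (fun j => ({(KV.x (j+1), false), (KV.y (j+1), true)} : Clause KV))

/-! The QUPARITY formula family. -/

inductive PV
  | x (i : ℕ)
  | a (i : ℕ)
  | y (i : ℕ)
deriving DecidableEq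

/-- Prefix ∃x₁…xₙ ∀a₁a₂ ∃y₂…yₙ. -/
def pPrefix (n : ℕ) : QPrefix PV :=
  (List.range n).map (fun j => ((Q.ex, PV.x (j+1)) : Q × PV)) ++
  [(Q.all, PV.a 1), (Q.all, PV.a 2)] ++
  (List.range (n-1)).map (fun k => ((Q.ex, PV.y (k+2)) : Q × PV))

/-- a₁ ∨ a₂ with sign `s` (s = true: unprimed clauses, s = false: primed clauses). -/
def pAA (s : Bool) : Clause PV := {(PV.a 1, s), (PV.a 2, s)}

/-- The clauses of QUPARITY_n. -/
def quparity (n : ℕ) : Cnf PV :=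
  ((Finset.univ : Finset Bool).biUnion (fun s =>
    ({({(PV.x 1, false), (PV.x 2, false), (PV.y 2, false)} : Clause PV) ∪ pAA s,
      ({(PV.x 1, false), (PV.x 2, true), (PV.y 2, true)} : Clause PV) ∪ pAA s,
      ({(PV.x 1, true), (PV.x 2, false), (PV.y 2, true)} : Clause PV) ∪ pAA s,
      ({(PV.x 1, true), (PV.x 2, true), (PV.y 2, false)} : Clause PV) ∪ pAA s} : Cnf PV) ∪
    ((Finset.range (n-2)).biUnion (fun k =>
      ({({(PV.y (k+2), false), (PV.x (k+3), false), (PV.y (k+3), false)} : Clause PV) ∪ pAA s,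
        ({(PV.y (k+2), false), (PV.x (k+3), true), (PV.y (k+3), true)} : Clause PV) ∪ pAA s,
        ({(PV.y (k+2), true), (PV.x (k+3), false), (PV.y (k+3), true)} : Clause PV) ∪ pAA s,
        ({(PV.y (k+2), true), (PV.x (k+3), true), (PV.y (k+3), false)} : Clause PV) ∪ pAA s} : Cnf PV))))) ∪
  {({(PV.a 1, true), (PV.a 2, true), (PV.y n, true)} : Clause PV),
   ({(PV.a 1, false), (PV.a 2, false), (PV.y n, false)} : Clause PV)}

/-- The symmetry σ₁ = (x₁ x₂)(x̄₁ x̄₂) of QUPARITY_n. -/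
def pSigma1 : Lit PV → Lit PV
  | (PV.x 1, b) => (PV.x 2, b)
  | (PV.x 2, b) => (PV.x 1, b)
  | l => l

/-- The symmetry σᵢ = (xᵢ x̄ᵢ)(a₁ ā₁)(a₂ ā₂)(yᵢ ȳᵢ)⋯(yₙ ȳₙ) of QUPARITY_n, 2 ≤ i ≤ n. -/
def pSigma (n i : ℕ) : Lit PV → Lit PV
  | (PV.x j, b) => if j = i then (PV.x j, !b) else (PV.x j, b)
  | (PV.a j, b) => if j = 1 ∨ j = 2 then (PV.a j, !b) else (PV.a j, b)
  | (PV.y j, b) => if i ≤ j ∧ j ≤ n then (PV.y j, !b) else (PV.y j, b)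

/-- The symmetry breaker ψₙ = (x̄₁ ∨ x₂) ∧ x̄₂ ∧ … ∧ x̄ₙ for QUPARITY_n. -/
def pPsi (n : ℕ) : Cnf PV :=
  {({(PV.x 1, false), (PV.x 2, true)} : Clause PV)} ∪
  (Finset.range (n-1)).image (fun k => ({(PV.x (k+2), false)} : Clause PV))

/-! The modified family KBKF'_n with blocking universal variables b_j. -/

inductive KV2
  | x (i : ℕ)
  | b (i : ℕ)
  | y (i : ℕ)
  | a (i : ℕ)
  | z (i : ℕ)
deriving DecidableEq

/-- Prefix ∃x₁∀b₁∃y₁∀a₁ … ∃xₙ∀bₙ∃yₙ∀aₙ ∃z₁…zₙ of KBKF'_n. -/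
def k2Prefix (n : ℕ) : QPrefix KV2 :=
  ((List.range n).flatMap
    (fun j => [(Q.ex, KV2.x (j+1)), (Q.all, KV2.b (j+1)),
               (Q.ex, KV2.y (j+1)), (Q.all, KV2.a (j+1))])) ++
  (List.range n).map (fun j => (Q.ex, KV2.z (j+1)))

/-- The map σᵢ = (xᵢ yᵢ)(x̄ᵢ ȳᵢ)(aᵢ āᵢ) on the literals of KBKF'_n. -/
def k2Sigma (i : ℕ) : Lit KV2 → Lit KV2
  | (KV2.x j, c) => if j = i then (KV2.y j, c) else (KV2.x j, c)
  | (KV2.y j, c) => if j = i then (KV2.x j, c) else (KV2.y j, c)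
  | (KV2.a j, c) => if j = i then (KV2.a j, !c) else (KV2.a j, c)
  | (KV2.b j, c) => (KV2.b j, c)
  | (KV2.z j, c) => (KV2.z j, c)


/-! ### Prefix indexing -/

def kf (j : ℕ) : List (Q × KV) := [(Q.ex, KV.x (j+1)), (Q.ex, KV.y (j+1)), (Q.all, KV.a (j+1))]

lemma kPrefix_eq (n : ℕ) : kPrefix n =
    ((List.range n).flatMap kf) ++ (List.range n).map (fun j => (Q.ex, KV.z (j+1))) := rfl

lemma len_flat (n : ℕ) : ((List.range n).flatMap kf).length = 3 * n := by
  induction n with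
  | zero => simp
  | succ m ih => rw [List.range_succ, List.flatMap_append, List.length_append, ih]; simp [kf]; omega

lemma flat_split {j n : ℕ} (h : j < n) : ∃ B,
    (List.range n).flatMap kf = (List.range j).flatMap kf ++ (kf j ++ B) := by
  refine ⟨((List.range (n-j-1)).map (fun x => (j+1)+x)).flatMap kf, ?_⟩
  conv_lhs => rw [show n = (j+1) + (n-j-1) by omega, List.range_add]
  rw [List.flatMap_append, List.range_succ, List.flatMap_append, List.append_assoc]
  simp

lemma kp_get {j n : ℕ} (h : j < n) {r : ℕ} (hr : r < 3) :
    (kPrefix n)[3*j + r]? = (kf j)[r]? := by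
  obtain ⟨B, hB⟩ := flat_split h
  rw [kPrefix_eq, List.getElem?_append_left (by rw [len_flat]; omega), hB,
    List.getElem?_append_right (by rw [len_flat]; omega), len_flat,
    List.getElem?_append_left (by simp [kf]; omega)]
  congr 1; omega

lemma kp_x {j n : ℕ} (h : j < n) : (kPrefix n)[3*j]? = some (Q.ex, KV.x (j+1)) := by
  have := kp_get h (r := 0) (by omega); simpa [kf] using this

lemma kp_y {j n : ℕ} (h : j < n) : (kPrefix n)[3*j+1]? = some (Q.ex, KV.y (j+1)) := by
  have := kp_get h (r := 1) (by omega); simpa [kf] using this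

lemma kp_a {j n : ℕ} (h : j < n) : (kPrefix n)[3*j+2]? = some (Q.all, KV.a (j+1)) := by
  have := kp_get h (r := 2) (by omega); simpa [kf] using this

lemma isExist_x {i n : ℕ} (h1 : 1 ≤ i) (h2 : i ≤ n) : IsExist (kPrefix n) (KV.x i) := by
  obtain ⟨j, rfl⟩ : ∃ j, i = j + 1 := ⟨i-1, by omega⟩
  rw [IsExist, kPrefix_eq]
  exact List.mem_append_left _ (List.mem_flatMap.2 ⟨j, by simp; omega, by simp [kf]⟩)

lemma isExist_y {i n : ℕ} (h1 : 1 ≤ i) (h2 : i ≤ n) : IsExist (kPrefix n) (KV.y i) := by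
  obtain ⟨j, rfl⟩ : ∃ j, i = j + 1 := ⟨i-1, by omega⟩
  rw [IsExist, kPrefix_eq]
  exact List.mem_append_left _ (List.mem_flatMap.2 ⟨j, by simp; omega, by simp [kf]⟩)

lemma isExist_z {i n : ℕ} (h1 : 1 ≤ i) (h2 : i ≤ n) : IsExist (kPrefix n) (KV.z i) := by
  obtain ⟨j, rfl⟩ : ∃ j, i = j + 1 := ⟨i-1, by omega⟩
  rw [IsExist, kPrefix_eq]
  exact List.mem_append_right _ (List.mem_map.2 ⟨j, by simp; omega, rfl⟩)

lemma isUniv_a {i n : ℕ} (h1 : 1 ≤ i) (h2 : i ≤ n) : IsUniv (kPrefix n) (KV.a i) := by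
  obtain ⟨j, rfl⟩ : ∃ j, i = j + 1 := ⟨i-1, by omega⟩
  rw [IsUniv, kPrefix_eq]
  exact List.mem_append_left _ (List.mem_flatMap.2 ⟨j, by simp; omega, by simp [kf]⟩)

lemma ltp_xa {i n : ℕ} (h1 : 1 ≤ i) (h2 : i ≤ n) : LtP (kPrefix n) (KV.x i) (KV.a i) := by
  obtain ⟨j, rfl⟩ : ∃ j, i = j + 1 := ⟨i-1, by omega⟩
  exact ⟨3*j, 3*j+2, by omega, ⟨Q.ex, kp_x (by omega)⟩, ⟨Q.all, kp_a (by omega)⟩⟩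

lemma sameBlock_xy {i n : ℕ} (h1 : 1 ≤ i) (h2 : i ≤ n) :
    SameBlock (kPrefix n) (KV.x i) (KV.y i) := by
  obtain ⟨j, rfl⟩ : ∃ j, i = j + 1 := ⟨i-1, by omega⟩
  have hj : j < n := by omega
  refine ⟨3*j, 3*j+1, ⟨Q.ex, kp_x hj⟩, ⟨Q.ex, kp_y hj⟩, ?_⟩
  intro k₁ k₂ e₁ e₂ hm h12 hM he₁ he₂
  have hk1 : k₁ = 3*j ∨ k₁ = 3*j+1 := by omega
  have hk2 : k₂ = 3*j ∨ k₂ = 3*j+1 := by omega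
  have hx := kp_x (n := n) hj
  have hy := kp_y (n := n) hj
  rcases hk1 with rfl | rfl <;> rcases hk2 with h | h <;> subst h <;> simp_all

lemma sameBlock_symm {P : QPrefix KV} {v w : KV} (h : SameBlock P v w) : SameBlock P w v := by
  obtain ⟨i, j, hi, hj, hq⟩ := h
  exact ⟨j, i, hj, hi, fun k₁ k₂ e₁ e₂ a b c d e => hq k₁ k₂ e₁ e₂ (by omega) b (by omega) d e⟩

/-! ### Clause names -/

def C1c : Clause KV := {(KV.x 1, false), (KV.y 1, false)}
def Cxc (j : ℕ) : Clause KV :=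
  {(KV.x (j+1), true), (KV.a (j+1), false), (KV.x (j+2), false), (KV.y (j+2), false)}
def Cyc (j : ℕ) : Clause KV :=
  {(KV.y (j+1), true), (KV.a (j+1), true), (KV.x (j+2), false), (KV.y (j+2), false)}
def CXn (n : ℕ) : Clause KV := ({(KV.x n, true), (KV.a n, false)} : Clause KV) ∪ kZneg n
def CYn (n : ℕ) : Clause KV := ({(KV.y n, true), (KV.a n, true)} : Clause KV) ∪ kZneg n
def B1c (j : ℕ) : Clause KV := {(KV.a (j+1), true), (KV.z (j+1), true)}
def B2c (j : ℕ) : Clause KV := {(KV.a (j+1), false), (KV.z (j+1), true)}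

lemma mem_kbkf {n : ℕ} {C : Clause KV} : C ∈ kbkf n ↔
    C = C1c ∨ (∃ j < n-1, C = Cxc j) ∨ (∃ j < n-1, C = Cyc j) ∨ C = CXn n ∨ C = CYn n ∨
    (∃ j < n, C = B1c j) ∨ (∃ j < n, C = B2c j) := by
  simp only [kbkf, Finset.mem_union, Finset.mem_image, Finset.mem_range, Finset.mem_insert,
    Finset.mem_singleton, C1c, Cxc, Cyc, CXn, CYn, B1c, B2c]
  constructor
  · rintro ((((((h | ⟨j, hj, h⟩) | ⟨j, hj, h⟩) | (h | h)) | ⟨j, hj, h⟩) | ⟨j, hj, h⟩))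
    all_goals subst h
    · tauto
    · exact Or.inr (Or.inl ⟨j, hj, rfl⟩)
    · exact Or.inr (Or.inr (Or.inl ⟨j, hj, rfl⟩))
    · tauto
    · tauto
    · exact Or.inr (Or.inr (Or.inr (Or.inr (Or.inr (Or.inl ⟨j, hj, rfl⟩)))))
    · exact Or.inr (Or.inr (Or.inr (Or.inr (Or.inr (Or.inr ⟨j, hj, rfl⟩)))))
  · rintro (h | ⟨j, hj, h⟩ | ⟨j, hj, h⟩ | h | h | ⟨j, hj, h⟩ | ⟨j, hj, h⟩)
    all_goals subst h
    · tauto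
    · exact Or.inl (Or.inl (Or.inl (Or.inl (Or.inr ⟨j, hj, rfl⟩))))
    · exact Or.inl (Or.inl (Or.inl (Or.inr ⟨j, hj, rfl⟩)))
    · tauto
    · tauto
    · exact Or.inl (Or.inr ⟨j, hj, rfl⟩)
    · exact Or.inr ⟨j, hj, rfl⟩

/-! ### The symmetries -/

lemma ks_x (i j : ℕ) (b : Bool) :
    kSigma i (KV.x j, b) = if j = i then (KV.y j, b) else (KV.x j, b) := rfl
lemma ks_y (i j : ℕ) (b : Bool) :
    kSigma i (KV.y j, b) = if j = i then (KV.x j, b) else (KV.y j, b) := rfl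
lemma ks_a (i j : ℕ) (b : Bool) :
    kSigma i (KV.a j, b) = if j = i then (KV.a j, !b) else (KV.a j, b) := rfl
lemma ks_z (i j : ℕ) (b : Bool) : kSigma i (KV.z j, b) = (KV.z j, b) := rfl

lemma ks_invol (i : ℕ) : Function.Involutive (kSigma i) := by
  rintro ⟨v, b⟩
  cases v <;> simp only [ks_x, ks_y, ks_a, ks_z] <;> split_ifs <;>
    simp_all [ks_x, ks_y, ks_a]

lemma ks_neg (i : ℕ) : ∀ l, kSigma i (negLit l) = negLit (kSigma i l) := by
  rintro ⟨v, b⟩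
  cases v <;> simp only [negLit, ks_x, ks_y, ks_a, ks_z] <;> split_ifs <;> simp

lemma image_self {α : Type*} [DecidableEq α] {f : α → α} (hf : ∀ C, f (f C) = C)
    {s : Finset α} (h : ∀ C ∈ s, f C ∈ s) : s.image f = s := by
  apply Finset.Subset.antisymm
  · intro C hC
    obtain ⟨D, hD, rfl⟩ := Finset.mem_image.1 hC
    exact h D hD
  · intro C hC
    exact Finset.mem_image.2 ⟨f C, h C hC, hf C⟩

lemma ks_zneg (i n : ℕ) : mapClause (kSigma i) (kZneg n) = kZneg n := by
  unfold mapClause kZneg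
  rw [Finset.image_image]
  rfl

lemma map_pair (σ : Lit KV → Lit KV) (l₁ l₂ : Lit KV) :
    mapClause σ {l₁, l₂} = {σ l₁, σ l₂} := by
  simp [mapClause, Finset.image_insert]

lemma map_quad (σ : Lit KV → Lit KV) (l₁ l₂ l₃ l₄ : Lit KV) :
    mapClause σ {l₁, l₂, l₃, l₄} = {σ l₁, σ l₂, σ l₃, σ l₄} := by
  simp [mapClause, Finset.image_insert]

lemma ks_mem_kbkf {i n : ℕ} (h1 : 1 ≤ i) (h2 : i ≤ n) :
    ∀ C ∈ kbkf n, mapClause (kSigma i) C ∈ kbkf n := by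
  intro C hC
  rw [mem_kbkf] at hC ⊢
  rcases hC with h | ⟨j, hj, h⟩ | ⟨j, hj, h⟩ | h | h | ⟨j, hj, h⟩ | ⟨j, hj, h⟩ <;> subst h
  · -- C1c
    by_cases hi : i = 1
    · subst hi
      refine Or.inl ?_
      rw [C1c, map_pair, ks_x, ks_y, if_pos rfl, if_pos rfl, Finset.pair_comm]
    · refine Or.inl ?_
      rw [C1c, map_pair, ks_x, ks_y, if_neg (by omega), if_neg (by omega)]
  · -- Cxc j, j < n-1
    by_cases hi : i = j+1
    · subst hi
      refine Or.inr (Or.inr (Or.inl ⟨j, hj, ?_⟩))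
      rw [Cxc, map_quad, ks_x, ks_a, ks_x, ks_y, if_pos rfl, if_pos rfl,
        if_neg (by omega), if_neg (by omega)]
      rfl
    · by_cases hi2 : i = j+2
      · subst hi2
        refine Or.inr (Or.inl ⟨j, hj, ?_⟩)
        rw [Cxc, map_quad, ks_x, ks_a, ks_x, ks_y, if_neg (by omega), if_neg (by omega),
          if_pos rfl, if_pos rfl]
        ext l
        simp [Cxc]
        tauto
      · refine Or.inr (Or.inl ⟨j, hj, ?_⟩)
        rw [Cxc, map_quad, ks_x, ks_a, ks_x, ks_y, if_neg (by omega), if_neg (by omega),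
          if_neg (by omega), if_neg (by omega)]
  · -- Cyc j
    by_cases hi : i = j+1
    · subst hi
      refine Or.inr (Or.inl ⟨j, hj, ?_⟩)
      rw [Cyc, map_quad, ks_y, ks_a, ks_x, ks_y, if_pos rfl, if_pos rfl,
        if_neg (by omega), if_neg (by omega)]
      rfl
    · by_cases hi2 : i = j+2
      · subst hi2
        refine Or.inr (Or.inr (Or.inl ⟨j, hj, ?_⟩))
        rw [Cyc, map_quad, ks_y, ks_a, ks_x, ks_y, if_neg (by omega), if_neg (by omega),
          if_pos rfl, if_pos rfl]
        ext l
        simp [Cyc]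
        tauto
      · refine Or.inr (Or.inr (Or.inl ⟨j, hj, ?_⟩))
        rw [Cyc, map_quad, ks_y, ks_a, ks_x, ks_y, if_neg (by omega), if_neg (by omega),
          if_neg (by omega), if_neg (by omega)]
  · -- CXn
    rw [CXn, mapClause, Finset.image_union, ← mapClause, ← mapClause, ks_zneg, map_pair,
      ks_x, ks_a]
    by_cases hi : i = n
    · subst hi
      rw [if_pos rfl, if_pos rfl]
      exact Or.inr (Or.inr (Or.inr (Or.inr (Or.inl rfl))))
    · rw [if_neg (by omega), if_neg (by omega)]
      exact Or.inr (Or.inr (Or.inr (Or.inl rfl)))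
  · -- CYn
    rw [CYn, mapClause, Finset.image_union, ← mapClause, ← mapClause, ks_zneg, map_pair,
      ks_y, ks_a]
    by_cases hi : i = n
    · subst hi
      rw [if_pos rfl, if_pos rfl]
      exact Or.inr (Or.inr (Or.inr (Or.inl rfl)))
    · rw [if_neg (by omega), if_neg (by omega)]
      exact Or.inr (Or.inr (Or.inr (Or.inr (Or.inl rfl))))
  · -- B1c
    by_cases hi : i = j+1
    · subst hi
      refine Or.inr (Or.inr (Or.inr (Or.inr (Or.inr (Or.inr ⟨j, hj, ?_⟩)))))
      rw [B1c, map_pair, ks_a, ks_z, if_pos rfl]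
      rfl
    · refine Or.inr (Or.inr (Or.inr (Or.inr (Or.inr (Or.inl ⟨j, hj, ?_⟩)))))
      rw [B1c, map_pair, ks_a, ks_z, if_neg (by omega)]
  · -- B2c
    by_cases hi : i = j+1
    · subst hi
      refine Or.inr (Or.inr (Or.inr (Or.inr (Or.inr (Or.inl ⟨j, hj, ?_⟩)))))
      rw [B2c, map_pair, ks_a, ks_z, if_pos rfl]
      rfl
    · refine Or.inr (Or.inr (Or.inr (Or.inr (Or.inr (Or.inr ⟨j, hj, ?_⟩)))))
      rw [B2c, map_pair, ks_a, ks_z, if_neg (by omega)]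

lemma ks_isSymmetry {i n : ℕ} (h1 : 1 ≤ i) (h2 : i ≤ n) :
    IsSymmetry (kPrefix n) (kbkf n) (kSigma i) := by
  constructor
  · refine ⟨(ks_invol i).bijective, ks_neg i, ?_⟩
    rintro v w b c hvw hne
    cases v with
    | x j =>
      rw [ks_x] at hvw
      split_ifs at hvw with hji
      · injection hvw with h h'
        subst h; subst hji
        exact sameBlock_xy h1 h2
      · injection hvw with h h'
        exact absurd h hne
    | y j =>
      rw [ks_y] at hvw
      split_ifs at hvw with hji
      · injection hvw with h h'
        subst h; subst hji
        exact sameBlock_symm (sameBlock_xy h1 h2)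
      · injection hvw with h h'
        exact absurd h hne
    | a j =>
      rw [ks_a] at hvw
      split_ifs at hvw with hji <;> (injection hvw with h h'; exact absurd h hne)
    | z j =>
      rw [ks_z] at hvw
      injection hvw with h h'
      exact absurd h hne
  · exact image_self (fun C => by
      rw [mapClause, mapClause, Finset.image_image]
      simpa [Function.comp_def] using Finset.image_congr (fun l _ => ks_invol i l) |>.trans Finset.image_id)
      (ks_mem_kbkf h1 h2)

/-! ### Building refutations line by line -/

def AllOK (P : QPrefix KV) (φ : Cnf KV) (D : List (Clause KV)) : Prop :=
  ∀ i (hi : i < D.length), StepOKS P φ D i (D[i]'hi)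

def AvM (φ : Cnf KV) (D : List (Clause KV)) (C : Clause KV) : Prop := C ∈ φ ∨ C ∈ D

lemma avM_append {φ : Cnf KV} {D D' : List (Clause KV)} {C : Clause KV}
    (h : AvM φ D C) : AvM φ (D ++ D') C := by
  rcases h with h | h
  · exact Or.inl h
  · exact Or.inr (List.mem_append_left _ h)

lemma avail_of_avM {φ : Cnf KV} {D : List (Clause KV)} {C : Clause KV}
    (h : AvM φ D C) : Avail φ D D.length C := by
  rcases h with h | h
  · exact Or.inl h
  · obtain ⟨j, hj, hEq⟩ := List.mem_iff_getElem.1 h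
    exact Or.inr ⟨j, hj, hj, hEq⟩

lemma avail_append {φ : Cnf KV} {D D' : List (Clause KV)} {i : ℕ} {C : Clause KV}
    (h : Avail φ D i C) : Avail φ (D ++ D') i C := by
  rcases h with h | ⟨j, hji, hj, hEq⟩
  · exact Or.inl h
  · exact Or.inr ⟨j, hji, by rw [List.length_append]; omega,
      by rw [List.getElem_append_left hj]; exact hEq⟩

lemma stepOKS_append {P : QPrefix KV} {φ : Cnf KV} {D D' : List (Clause KV)} {i : ℕ}
    {C : Clause KV} (h : StepOKS P φ D i C) : StepOKS P φ (D ++ D') i C := by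
  rcases h with (⟨E₁, E₂, h1, h2, h3⟩ | ⟨F₁, h1, h2⟩) | ⟨F₁, σ, h1, h2, h3⟩
  · exact Or.inl (Or.inl ⟨E₁, E₂, avail_append h1, avail_append h2, h3⟩)
  · exact Or.inl (Or.inr ⟨F₁, avail_append h1, h2⟩)
  · exact Or.inr ⟨F₁, σ, avail_append h1, h2, h3⟩

lemma stepR {P : QPrefix KV} {φ : Cnf KV} {D : List (Clause KV)} {E₁ E₂ C : Clause KV}
    (h1 : AvM φ D E₁) (h2 : AvM φ D E₂) (h : ResStep P E₁ E₂ C) :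
    StepOKS P φ D D.length C :=
  Or.inl (Or.inl ⟨E₁, E₂, avail_of_avM h1, avail_of_avM h2, h⟩)

lemma stepU {P : QPrefix KV} {φ : Cnf KV} {D : List (Clause KV)} {F₁ C : Clause KV}
    (h1 : AvM φ D F₁) (h : URed P F₁ C) : StepOKS P φ D D.length C :=
  Or.inl (Or.inr ⟨F₁, avail_of_avM h1, h⟩)

lemma stepS {P : QPrefix KV} {φ : Cnf KV} {D : List (Clause KV)} {F₁ : Clause KV}
    {σ : Lit KV → Lit KV} (h1 : AvM φ D F₁) (h : IsSymmetry P φ σ) :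
    StepOKS P φ D D.length (mapClause σ F₁) :=
  Or.inr ⟨F₁, σ, avail_of_avM h1, h, rfl⟩

lemma allOK_nil {P : QPrefix KV} {φ : Cnf KV} : AllOK P φ [] := by
  intro i hi; simp at hi

lemma allOK_snoc {P : QPrefix KV} {φ : Cnf KV} {D : List (Clause KV)} {C : Clause KV}
    (hD : AllOK P φ D) (hC : StepOKS P φ D D.length C) : AllOK P φ (D ++ [C]) := by
  intro i hi
  rcases Nat.lt_or_ge i D.length with h | h
  · have e : (D ++ [C])[i]'hi = D[i]'h := List.getElem_append_left h
    rw [e]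
    exact stepOKS_append (hD i h)
  · have hi' : i = D.length := by simp at hi; omega
    subst hi'
    have e : (D ++ [C])[D.length]'hi = C := by simp
    rw [e]
    exact stepOKS_append hC

def aNeg (k : ℕ) : Clause KV := (Finset.range k).image fun j => ((KV.a (j+1), false) : Lit KV)
def zIco (k n : ℕ) : Clause KV := (Finset.Ico k n).image fun j => ((KV.z (j+1), false) : Lit KV)
def Gc (n k : ℕ) : Clause KV := insert (KV.x n, true) (insert (KV.a n, false) (aNeg k ∪ zIco k n))
def Kc (i : ℕ) : Clause KV := insert (KV.x i, true) (aNeg i)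
def Ec (i : ℕ) : Clause KV := insert (KV.x i, true) (aNeg (i-1))
def Fc (i : ℕ) : Clause KV := insert (KV.y i, true) (aNeg (i-1))
def Hc (i : ℕ) : Clause KV := insert (KV.x i, true) (insert (KV.y (i+1), false) (aNeg i))

@[simp] lemma aNeg_a {m k : ℕ} {b : Bool} :
    ((KV.a m, b) : Lit KV) ∈ aNeg k ↔ b = false ∧ 1 ≤ m ∧ m ≤ k := by
  simp only [aNeg, Finset.mem_image, Finset.mem_range, Prod.mk.injEq, KV.a.injEq]
  constructor
  · rintro ⟨j, hj, rfl, rfl⟩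
    exact ⟨rfl, by omega, by omega⟩
  · rintro ⟨rfl, h1, h2⟩
    exact ⟨m-1, by omega, by omega, rfl⟩

@[simp] lemma aNeg_x {m k : ℕ} {b : Bool} : ((KV.x m, b) : Lit KV) ∉ aNeg k := by simp [aNeg]
@[simp] lemma aNeg_y {m k : ℕ} {b : Bool} : ((KV.y m, b) : Lit KV) ∉ aNeg k := by simp [aNeg]
@[simp] lemma aNeg_z {m k : ℕ} {b : Bool} : ((KV.z m, b) : Lit KV) ∉ aNeg k := by simp [aNeg]

@[simp] lemma zIco_z {m k n : ℕ} {b : Bool} :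
    ((KV.z m, b) : Lit KV) ∈ zIco k n ↔ b = false ∧ k + 1 ≤ m ∧ m ≤ n := by
  simp only [zIco, Finset.mem_image, Finset.mem_Ico, Prod.mk.injEq, KV.z.injEq]
  constructor
  · rintro ⟨j, ⟨h1, h2⟩, rfl, rfl⟩
    exact ⟨rfl, by omega, by omega⟩
  · rintro ⟨rfl, h1, h2⟩
    exact ⟨m-1, ⟨by omega, by omega⟩, by omega, rfl⟩

@[simp] lemma zIco_x {m k n : ℕ} {b : Bool} : ((KV.x m, b) : Lit KV) ∉ zIco k n := by simp [zIco]
@[simp] lemma zIco_y {m k n : ℕ} {b : Bool} : ((KV.y m, b) : Lit KV) ∉ zIco k n := by simp [zIco]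
@[simp] lemma zIco_a {m k n : ℕ} {b : Bool} : ((KV.a m, b) : Lit KV) ∉ zIco k n := by simp [zIco]

lemma kZneg_eq (n : ℕ) : kZneg n = zIco 0 n := by
  rw [kZneg, zIco, Finset.range_eq_Ico]

lemma gc_zero (n : ℕ) : Gc n 0 = CXn n := by
  ext ⟨v, b⟩
  cases v <;> cases b <;>
    simp [Gc, CXn, kZneg_eq, Finset.mem_union] <;> omega

lemma gc_last {n : ℕ} (hn : 1 ≤ n) : Gc n n = Kc n := by
  ext ⟨v, b⟩
  cases v <;> cases b <;>
    simp [Gc, Kc, Finset.mem_union] <;> omega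

lemma res_G {n k : ℕ} (hk : k < n) : ResStep (kPrefix n) (B2c k) (Gc n k) (Gc n (k+1)) := by
  refine ⟨KV.z (k+1), isExist_z (by omega) (by omega), by simp [B2c],
    by simp [Gc, Finset.mem_union]; omega, ?_, ?_⟩
  · ext ⟨v, b⟩
    cases v <;> cases b <;>
      simp [B2c, Gc, Finset.mem_union, Finset.mem_erase] <;> omega
  · rintro ⟨⟨v, b⟩, hl, hnl⟩
    cases v <;> cases b <;>
      simp [Gc, negLit, Finset.mem_union] at hl hnl <;> omega

lemma res_H {n j : ℕ} (hj : j + 2 ≤ n) :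
    ResStep (kPrefix n) (Ec (j+2)) (Cxc j) (Hc (j+1)) := by
  refine ⟨KV.x (j+2), isExist_x (by omega) (by omega), by simp [Ec], by simp [Cxc], ?_, ?_⟩
  · ext ⟨v, b⟩
    cases v <;> cases b <;>
      simp [Ec, Cxc, Hc, Finset.mem_union, Finset.mem_erase] <;> omega
  · rintro ⟨⟨v, b⟩, hl, hnl⟩
    cases v <;> cases b <;> simp [Hc, negLit] at hl hnl <;> omega

lemma res_K {n j : ℕ} (hj : j + 2 ≤ n) :
    ResStep (kPrefix n) (Fc (j+2)) (Hc (j+1)) (Kc (j+1)) := by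
  refine ⟨KV.y (j+2), isExist_y (by omega) (by omega), by simp [Fc], by simp [Hc], ?_, ?_⟩
  · ext ⟨v, b⟩
    cases v <;> cases b <;>
      simp [Fc, Hc, Kc, Finset.mem_union, Finset.mem_erase] <;> omega
  · rintro ⟨⟨v, b⟩, hl, hnl⟩
    cases v <;> cases b <;> simp [Kc, negLit] at hl hnl <;> omega

lemma not_isExist_a {n m : ℕ} : ¬ IsExist (kPrefix n) (KV.a m) := by
  intro h
  rw [IsExist, kPrefix_eq] at h
  rcases List.mem_append.1 h with h | h
  · obtain ⟨j, _, hm⟩ := List.mem_flatMap.1 h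
    simp [kf] at hm
  · obtain ⟨j, _, hm⟩ := List.mem_map.1 h
    simp at hm

lemma ured_K {n i : ℕ} (h1 : 1 ≤ i) (h2 : i ≤ n) : URed (kPrefix n) (Kc i) (Ec i) := by
  refine ⟨(KV.a i, false), isUniv_a h1 h2, by simp [Kc]; omega,
    by simp [Kc, negLit], ?_, ?_⟩
  · ext ⟨v, b⟩
    cases v <;> cases b <;>
      simp [Kc, Ec, Finset.mem_erase] <;> omega
  · rintro ⟨v, b⟩ hk hke
    cases v <;> simp [Kc, Finset.mem_erase] at hk
    · obtain ⟨rfl, rfl⟩ := hk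
      exact ltp_xa h1 h2
    · exact absurd hke not_isExist_a

lemma fc_eq (i : ℕ) : Fc i = mapClause (kSigma i) (Ec i) := by
  rw [Ec, mapClause, Finset.image_insert, ks_x, if_pos rfl, Fc]
  congr 1
  rw [aNeg, Finset.image_image]
  apply Finset.image_congr
  intro j hj
  simp only [Finset.mem_range, Finset.coe_range, Set.mem_Iio] at hj
  simp [Function.comp, ks_a, if_neg (by omega : ¬ j + 1 = i)]

lemma res_fin1 {n : ℕ} (hn : 1 ≤ n) :
    ResStep (kPrefix n) (Ec 1) C1c ({(KV.y 1, false)} : Clause KV) := by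
  refine ⟨KV.x 1, isExist_x le_rfl hn, by simp [Ec], by simp [C1c], ?_, ?_⟩
  · ext ⟨v, b⟩
    cases v <;> cases b <;>
      simp [Ec, C1c, Finset.mem_erase] <;> omega
  · rintro ⟨⟨v, b⟩, hl, hnl⟩
    cases v <;> cases b <;> simp [negLit] at hl hnl

lemma res_fin2 {n : ℕ} (hn : 1 ≤ n) :
    ResStep (kPrefix n) (Fc 1) ({(KV.y 1, false)} : Clause KV) (∅ : Clause KV) := by
  refine ⟨KV.y 1, isExist_y le_rfl hn, by simp [Fc], by simp, ?_, ?_⟩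
  · ext ⟨v, b⟩
    cases v <;> cases b <;>
      simp [Fc, Finset.mem_erase] <;> omega
  · rintro ⟨⟨v, b⟩, hl, hnl⟩
    simp at hl

lemma c1_mem {n : ℕ} : C1c ∈ kbkf n := mem_kbkf.2 (Or.inl rfl)
lemma cxc_mem {n j : ℕ} (hj : j < n - 1) : Cxc j ∈ kbkf n :=
  mem_kbkf.2 (Or.inr (Or.inl ⟨j, hj, rfl⟩))
lemma cxn_mem {n : ℕ} : CXn n ∈ kbkf n :=
  mem_kbkf.2 (Or.inr (Or.inr (Or.inr (Or.inl rfl))))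
lemma b2_mem {n k : ℕ} (hk : k < n) : B2c k ∈ kbkf n :=
  mem_kbkf.2 (Or.inr (Or.inr (Or.inr (Or.inr (Or.inr (Or.inr ⟨k, hk, rfl⟩))))))

lemma phase1 {n : ℕ} : ∀ k, k ≤ n → ∃ D : List (Clause KV),
    AllOK (kPrefix n) (kbkf n) D ∧ D.length = k ∧ AvM (kbkf n) D (Gc n k) := by
  intro k
  induction k with
  | zero => exact fun _ => ⟨[], allOK_nil, rfl, Or.inl (by rw [gc_zero]; exact cxn_mem)⟩
  | succ m ih =>
    intro h
    obtain ⟨D, hOK, hlen, hG⟩ := ih (by omega)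
    refine ⟨D ++ [Gc n (m+1)], ?_, by simp [hlen], Or.inr (by simp)⟩
    exact allOK_snoc hOK (stepR (Or.inl (b2_mem (by omega))) hG (res_G (by omega)))

lemma loopEF {n : ℕ} (hn : 1 ≤ n) : ∀ t, t ≤ n - 1 → ∃ D : List (Clause KV),
    AllOK (kPrefix n) (kbkf n) D ∧ D.length = n + 2 + 4 * t ∧
    AvM (kbkf n) D (Ec (n - t)) ∧ AvM (kbkf n) D (Fc (n - t)) := by
  intro t
  induction t with
  | zero =>
    intro _
    obtain ⟨D, hOK, hlen, hG⟩ := phase1 n le_rfl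
    rw [gc_last hn] at hG
    have hOK1 : AllOK (kPrefix n) (kbkf n) (D ++ [Ec n]) :=
      allOK_snoc hOK (stepU hG (ured_K hn le_rfl))
    have hE : AvM (kbkf n) (D ++ [Ec n]) (Ec n) := Or.inr (by simp)
    have hOK2 : AllOK (kPrefix n) (kbkf n) ((D ++ [Ec n]) ++ [Fc n]) :=
      allOK_snoc hOK1 (fc_eq n ▸ stepS hE (ks_isSymmetry hn le_rfl))
    refine ⟨(D ++ [Ec n]) ++ [Fc n], hOK2, by simp [hlen], ?_, ?_⟩
    · simpa using avM_append (D' := [Fc n]) hE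
    · simp only [Nat.sub_zero]
      exact Or.inr (by simp)
  | succ t ih =>
    intro ht
    obtain ⟨D, hOK, hlen, hE, hF⟩ := ih (by omega)
    obtain ⟨j, hj⟩ : ∃ j, n - t = j + 2 := ⟨n - t - 2, by omega⟩
    have hj2 : j + 2 ≤ n := by omega
    have hnt : n - (t + 1) = j + 1 := by omega
    rw [hj] at hE hF
    -- line 1 : Hc (j+1)
    have s1 : AllOK (kPrefix n) (kbkf n) (D ++ [Hc (j+1)]) :=
      allOK_snoc hOK (stepR hE (Or.inl (cxc_mem (by omega))) (res_H hj2))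
    -- line 2 : Kc (j+1)
    have s2 : AllOK (kPrefix n) (kbkf n) ((D ++ [Hc (j+1)]) ++ [Kc (j+1)]) :=
      allOK_snoc s1 (stepR (avM_append hF) (Or.inr (by simp)) (res_K hj2))
    -- line 3 : Ec (j+1)
    have s3 : AllOK (kPrefix n) (kbkf n) (((D ++ [Hc (j+1)]) ++ [Kc (j+1)]) ++ [Ec (j+1)]) :=
      allOK_snoc s2 (stepU (Or.inr (by simp)) (ured_K (by omega) (by omega)))
    have hE' : AvM (kbkf n) (((D ++ [Hc (j+1)]) ++ [Kc (j+1)]) ++ [Ec (j+1)]) (Ec (j+1)) :=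
      Or.inr (by simp)
    -- line 4 : Fc (j+1)
    have s4 : AllOK (kPrefix n) (kbkf n)
        ((((D ++ [Hc (j+1)]) ++ [Kc (j+1)]) ++ [Ec (j+1)]) ++ [Fc (j+1)]) :=
      allOK_snoc s3 (fc_eq (j+1) ▸ stepS hE' (ks_isSymmetry (by omega) (by omega)))
    refine ⟨_, s4, by simp [hlen]; omega, ?_, ?_⟩
    · rw [hnt]
      exact avM_append hE'
    · rw [hnt]
      exact Or.inr (by simp)

/-- KBKF_n has a Q-Res+S refutation with at most 5n applications
of the rules S, R, U. -/
theorem kbkf_qres_s_short_refutation : ∀ n : ℕ, 1 ≤ n →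
    ∃ D : List (Clause KV),
      IsRefutationS (kPrefix n) (kbkf n) D ∧ D.length ≤ 5 * n := by
  intro n hn
  obtain ⟨D, hOK, hlen, hE, hF⟩ := loopEF hn (n-1) le_rfl
  have h1 : n - (n - 1) = 1 := by omega
  rw [h1] at hE hF
  have s1 : AllOK (kPrefix n) (kbkf n) (D ++ [({(KV.y 1, false)} : Clause KV)]) :=
    allOK_snoc hOK (stepR hE (Or.inl c1_mem) (res_fin1 hn))
  have s2 : AllOK (kPrefix n) (kbkf n)
      ((D ++ [({(KV.y 1, false)} : Clause KV)]) ++ [(∅ : Clause KV)]) :=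
    allOK_snoc s1 (stepR (avM_append hF) (Or.inr (by simp)) (res_fin2 hn))
  refine ⟨_, ⟨s2, List.getLast?_concat⟩, ?_⟩
  simp [hlen]
  omega
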